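/- arXiv:1111.4600 — 2 statements merged into one kernel-verified Lean document; each statement's English description precedes it below -/
import Mathlib

section
/- Let G be a nontrivial strongly connected directed graph with N nodes, girth g, and cyclicity c. For every node i of G and every integer n that is a multiple of c and satisfies n ≥ 2Ng/c − g/c − 2g + c, there exists a closed path of length n starting at i. -/
namespace Transients

variable {V : Type*}

/-- A walk of length `n` in the graph with edge relation `E`, given by its node
sequence `p 0, p 1, …, p n`. -/
def IsWalk (E : V → V → Prop) (n : ℕ) (p : ℕ → V) : Prop :=
  ∀ k, k < n → E (p k) (p (k + 1))

/-- A closed walk: start node equals end node. -/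
def IsClosedWalk (E : V → V → Prop) (n : ℕ) (p : ℕ → V) : Prop :=
  IsWalk E n p ∧ p 0 = p n

/-- A nonempty elementary closed walk: closed, and no node repeats except start = end. -/
def IsElemClosedWalk (E : V → V → Prop) (n : ℕ) (p : ℕ → V) : Prop :=
  0 < n ∧ IsClosedWalk E n p ∧ ∀ k l, k < n → l < n → p k = p l → k = l

/-- A simple walk: no node is visited twice. -/
def IsSimpleWalk (E : V → V → Prop) (n : ℕ) (p : ℕ → V) : Prop :=
  IsWalk E n p ∧ ∀ k l, k ≤ n → l ≤ n → p k = p l → k = l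

def StronglyConnected (E : V → V → Prop) : Prop :=
  ∀ i j : V, ∃ n p, IsWalk E n p ∧ p 0 = i ∧ p n = j

def NontrivialGraph (E : V → V → Prop) : Prop := ∃ i j, E i j

/-- The weight `w_*` of a walk in an edge-weighted graph. -/
noncomputable def walkWeight (w : V → V → ℝ) (n : ℕ) (p : ℕ → V) : ℝ :=
  ∑ k ∈ Finset.range n, w (p k) (p (k + 1))

/-- The rate ρ(G): supremum of `w_*(γ)/ℓ(γ)` over nonempty closed walks γ. -/
noncomputable def rate (E : V → V → Prop) (w : V → V → ℝ) : ℝ :=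
  sSup {x : ℝ | ∃ n p, 0 < n ∧ IsClosedWalk E n p ∧ x = walkWeight w n p / n}

/-- A critical closed walk: nonempty, closed, and its weight is ρ(G) times its length. -/
def IsCriticalWalk (E : V → V → Prop) (w : V → V → ℝ) (n : ℕ) (p : ℕ → V) : Prop :=
  0 < n ∧ IsClosedWalk E n p ∧ walkWeight w n p = rate E w * n

/-- A critical node: lies on some critical closed walk. -/
def CriticalNode (E : V → V → Prop) (w : V → V → ℝ) (i : V) : Prop :=
  ∃ n p k, IsCriticalWalk E w n p ∧ k ≤ n ∧ p k = i

/-- A critical edge: lies on some critical closed walk. -/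
def CriticalEdge (E : V → V → Prop) (w : V → V → ℝ) (i j : V) : Prop :=
  ∃ n p k, IsCriticalWalk E w n p ∧ k < n ∧ p k = i ∧ p (k + 1) = j

/-- The non-critical rate ρ_nc(G): supremum of mean weights of nonempty closed walks
containing no critical node. -/
noncomputable def ncRate (E : V → V → Prop) (w : V → V → ℝ) : ℝ :=
  sSup {x : ℝ | ∃ n p, 0 < n ∧ IsClosedWalk E n p ∧
    (∀ k, k ≤ n → ¬ CriticalNode E w (p k)) ∧ x = walkWeight w n p / n}

/-- Δ(G), the maximum edge weight. -/
noncomputable def maxWeight (E : V → V → Prop) (w : V → V → ℝ) : ℝ :=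
  sSup {x : ℝ | ∃ i j, E i j ∧ x = w i j}

/-- δ(G), the minimum edge weight. -/
noncomputable def minWeight (E : V → V → Prop) (w : V → V → ℝ) : ℝ :=
  sInf {x : ℝ | ∃ i j, E i j ∧ x = w i j}

open Classical in
/-- Δ_nc(G), the maximum weight of an edge joining two non-critical nodes
(ρ(G) if there is no such edge). -/
noncomputable def maxNcWeight (E : V → V → Prop) (w : V → V → ℝ) : ℝ :=
  if (∃ i j, E i j ∧ ¬ CriticalNode E w i ∧ ¬ CriticalNode E w j) then
    sSup {x : ℝ | ∃ i j, E i j ∧ ¬ CriticalNode E w i ∧ ¬ CriticalNode E w j ∧ x = w i j}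
  else rate E w

/-- `d` is the greatest common divisor of the set `S` of naturals. -/
def IsGcdOf (d : ℕ) (S : Set ℕ) : Prop :=
  (∀ s ∈ S, d ∣ s) ∧ ∀ e : ℕ, (∀ s ∈ S, e ∣ s) → e ∣ d

/-- The set of lengths of nonempty closed walks in the graph. -/
def ClosedLengths (E : V → V → Prop) : Set ℕ :=
  {n | 0 < n ∧ ∃ p, IsClosedWalk E n p}

/-- The set of lengths of nonempty closed walks starting at `i`. -/
def ClosedLengthsAt (E : V → V → Prop) (i : V) : Set ℕ :=
  {n | 0 < n ∧ ∃ p, IsWalk E n p ∧ p 0 = i ∧ p n = i}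

/-- There is a (possibly empty) closed walk of length `n` starting at `i`. -/
def HasClosedWalkAt (E : V → V → Prop) (i : V) (n : ℕ) : Prop :=
  ∃ p, IsWalk E n p ∧ p 0 = i ∧ p n = i

/-- cd(G), the cab driver's diameter: the maximum length of simple walks. -/
noncomputable def cabDiameter (E : V → V → Prop) : ℕ :=
  sSup {n | ∃ p, IsSimpleWalk E n p}

/-- cr(G), the circumference: the maximum length of nonempty elementary closed walks. -/
noncomputable def circumference (E : V → V → Prop) : ℕ :=
  sSup {n | ∃ p, IsElemClosedWalk E n p}

/-- `g` is the girth of the graph: the minimum length of nonempty elementary closed walks. -/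
def IsGirth (E : V → V → Prop) (g : ℕ) : Prop :=
  IsLeast {n | ∃ p, IsElemClosedWalk E n p} g

/-- `ep` is the exploration penalty of a graph of cyclicity `c`: the least `m` such that
for every node `i` and every multiple `n` of `c` with `n ≥ m` there is a closed walk
of length `n` starting at `i`. -/
def IsEp (E : V → V → Prop) (c ep : ℕ) : Prop :=
  IsLeast {m | ∀ i : V, ∀ n : ℕ, c ∣ n → m ≤ n → HasClosedWalkAt E i n} ep

/-- `i` and `j` lie in the same strongly connected component of the graph. -/
def SameComp (E : V → V → Prop) (i j : V) : Prop :=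
  (∃ n p, IsWalk E n p ∧ p 0 = i ∧ p n = j) ∧ (∃ n p, IsWalk E n p ∧ p 0 = j ∧ p n = i)

/-- `m` is the exploration penalty of the strongly connected component of `k`
(a component of cyclicity `c`). -/
def IsCompEp (E : V → V → Prop) (k : V) (c m : ℕ) : Prop :=
  IsLeast {m' | ∀ i : V, SameComp E k i → ∀ n : ℕ, c ∣ n → m' ≤ n → HasClosedWalkAt E i n} m

/-- Max-plus matrix product. -/
noncomputable def mpMul {N : ℕ} (A B : Matrix (Fin N) (Fin N) (WithBot ℝ)) :
    Matrix (Fin N) (Fin N) (WithBot ℝ) :=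
  fun i j => Finset.univ.sup fun k => A i k + B k j

/-- Max-plus matrix power, `A^{⊗n}`. -/
noncomputable def mpPow {N : ℕ} (A : Matrix (Fin N) (Fin N) (WithBot ℝ)) :
    ℕ → Matrix (Fin N) (Fin N) (WithBot ℝ)
  | 0 => fun i j => if i = j then (0 : WithBot ℝ) else ⊥
  | n + 1 => mpMul A (mpPow A n)

/-- Max-plus matrix-vector product. -/
noncomputable def mpVec {N : ℕ} (A : Matrix (Fin N) (Fin N) (WithBot ℝ))
    (v : Fin N → WithBot ℝ) : Fin N → WithBot ℝ :=
  fun i => Finset.univ.sup fun j => A i j + v j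

/-- The edge relation of the weighted graph `G(A)`. -/
def mEdge {N : ℕ} (A : Matrix (Fin N) (Fin N) (WithBot ℝ)) : Fin N → Fin N → Prop :=
  fun i j => A i j ≠ ⊥

/-- The edge weights of the weighted graph `G(A)`. -/
noncomputable def mWeight {N : ℕ} (A : Matrix (Fin N) (Fin N) (WithBot ℝ)) :
    Fin N → Fin N → ℝ :=
  fun i j => (A i j).unbotD 0

/-- `A` is irreducible: `G(A)` is strongly connected and has at least one edge. -/
def MPIrreducible {N : ℕ} (A : Matrix (Fin N) (Fin N) (WithBot ℝ)) : Prop :=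
  StronglyConnected (mEdge A) ∧ NontrivialGraph (mEdge A)

/-- The linear max-plus system `x(n) = A^{⊗n} ⊗ v`. -/
noncomputable def mpSystem {N : ℕ} (A : Matrix (Fin N) (Fin N) (WithBot ℝ)) (v : Fin N → ℝ)
    (n : ℕ) : Fin N → WithBot ℝ :=
  mpVec (mpPow A n) fun j => (v j : WithBot ℝ)

/-- The set of indices from which the system `x_{A,v}` is periodic with increment
`p·ρ(A)`; its least element is the transient `n_{A,v}`. -/
noncomputable def SysTransientSet {N : ℕ} (A : Matrix (Fin N) (Fin N) (WithBot ℝ))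
    (v : Fin N → ℝ) : Set ℕ :=
  {n₀ | ∃ p : ℕ, 0 < p ∧ ∀ n, n₀ ≤ n → ∀ i,
    mpSystem A v (n + p) i
      = mpSystem A v n i + ((p * rate (mEdge A) (mWeight A) : ℝ) : WithBot ℝ)}

/-- The set of indices from which the powers of `A` are periodic with increment
`p·ρ(A)`; its least element is the transient `n_A`. -/
noncomputable def MatTransientSet {N : ℕ} (A : Matrix (Fin N) (Fin N) (WithBot ℝ)) : Set ℕ :=
  {n₀ | ∃ p : ℕ, 0 < p ∧ ∀ n, n₀ ≤ n → ∀ i j,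
    mpPow A (n + p) i j
      = mpPow A n i j + ((p * rate (mEdge A) (mWeight A) : ℝ) : WithBot ℝ)}

/-- `‖v‖ = max_i v_i − min_i v_i`. -/
noncomputable def vnorm {N : ℕ} (v : Fin N → ℝ) : ℝ :=
  sSup (Set.range v) - sInf (Set.range v)


section StmtSevenAux

variable {E : V → V → Prop}

private lemma isWalk_mono {n m : ℕ} {p : ℕ → V} (h : IsWalk E n p) (hmn : m ≤ n) :
    IsWalk E m p := fun k hk => h k (lt_of_lt_of_le hk hmn)

private lemma hasClosedWalkAt_zero (E : V → V → Prop) (v : V) : HasClosedWalkAt E v 0 :=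
  ⟨fun _ => v, fun k hk => absurd hk (Nat.not_lt_zero k), rfl, rfl⟩

private lemma walkft_trans {x y z : V} {a b : ℕ}
    (h1 : ∃ p, IsWalk E a p ∧ p 0 = x ∧ p a = y)
    (h2 : ∃ p, IsWalk E b p ∧ p 0 = y ∧ p b = z) :
    ∃ p, IsWalk E (a + b) p ∧ p 0 = x ∧ p (a + b) = z := by
  obtain ⟨q, hq, hq0, hqa⟩ := h1
  obtain ⟨r, hr, hr0, hrb⟩ := h2
  refine ⟨fun t => if t < a then q t else r (t - a), ?_, ?_, ?_⟩
  · intro k hk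
    rcases Nat.lt_or_ge (k + 1) a with h1 | h1
    · simp only [if_pos (Nat.lt_of_succ_lt h1), if_pos h1]
      exact hq k (by omega)
    · rcases Nat.lt_or_ge k a with h2 | h2
      · have hka : k + 1 = a := by omega
        simp only [if_pos h2, if_neg (by omega : ¬ k + 1 < a)]
        have hre : r (k + 1 - a) = q (k + 1) := by
          rw [hka, Nat.sub_self, hr0, ← hqa]
        rw [hre]
        exact hq k (by omega)
      · simp only [if_neg (by omega : ¬ k < a), if_neg (by omega : ¬ k + 1 < a)]
        have h3 : k + 1 - a = (k - a) + 1 := by omega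
        rw [h3]
        exact hr (k - a) (by omega)
  · rcases Nat.eq_zero_or_pos a with h | h
    · simp only [if_neg (by omega : ¬ (0:ℕ) < a)]
      rw [show 0 - a = 0 by omega, hr0, ← hqa, h, hq0]
    · simp only [if_pos h]
      exact hq0
  · simp only [if_neg (by omega : ¬ a + b < a)]
    rw [show a + b - a = b by omega]
    exact hrb

private lemma closed_iterate {v : V} {m : ℕ}
    (h : HasClosedWalkAt E v m) (k : ℕ) : HasClosedWalkAt E v (k * m) := by
  induction k with
  | zero => simpa using hasClosedWalkAt_zero E v
  | succ k ih =>
    have := walkft_trans ih h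
    rwa [show k * m + m = (k + 1) * m by ring] at this

private lemma walk_cut {n : ℕ} {q : ℕ → V} (hq : IsWalk E n q)
    {k l : ℕ} (hkl : k ≤ l) (hln : l ≤ n) (heq : q k = q l) :
    ∃ p, IsWalk E (n - (l - k)) p ∧ p 0 = q 0 ∧ p (n - (l - k)) = q n := by
  refine ⟨fun t => if t < k then q t else q (t + (l - k)), ?_, ?_, ?_⟩
  · intro x hx
    rcases Nat.lt_or_ge (x + 1) k with h1 | h1
    · simp only [if_pos (Nat.lt_of_succ_lt h1), if_pos h1]
      exact hq x (by omega)
    · rcases Nat.lt_or_ge x k with h2 | h2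
      · have hxk : x + 1 = k := by omega
        simp only [if_pos h2, if_neg (by omega : ¬ x + 1 < k)]
        have h3 : x + 1 + (l - k) = l := by omega
        rw [h3, ← heq, ← hxk]
        exact hq x (by omega)
      · simp only [if_neg (by omega : ¬ x < k), if_neg (by omega : ¬ x + 1 < k)]
        have h3 : x + 1 + (l - k) = x + (l - k) + 1 := by omega
        rw [h3]
        exact hq _ (by omega)
  · rcases Nat.eq_zero_or_pos k with h | h
    · simp only [if_neg (by omega : ¬ (0:ℕ) < k)]
      rw [show 0 + (l - k) = l by omega, ← heq, h]
    · simp only [if_pos h]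
  · simp only [if_neg (by omega : ¬ n - (l - k) < k)]
    rw [show n - (l - k) + (l - k) = n by omega]

private lemma exists_simple_walk :
    ∀ (n : ℕ) (q : ℕ → V), IsWalk E n q →
    ∃ m r, IsWalk E m r ∧ r 0 = q 0 ∧ r m = q n ∧
      ∀ k l, k ≤ m → l ≤ m → r k = r l → k = l := by
  intro n
  induction n using Nat.strong_induction_on with
  | _ n ih =>
    intro q hq
    by_cases h : ∃ k l, k < l ∧ l ≤ n ∧ q k = q l
    · obtain ⟨k, l, hkl, hln, heq⟩ := h
      obtain ⟨p, hp, hp0, hpn⟩ := walk_cut hq (le_of_lt hkl) hln heq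
      have hlt : n - (l - k) < n := by omega
      obtain ⟨m, r, h1, h2, h3, h4⟩ := ih _ hlt p hp
      exact ⟨m, r, h1, by rwa [hp0] at h2, by rwa [hpn] at h3, h4⟩
    · push_neg at h
      refine ⟨n, q, hq, rfl, rfl, ?_⟩
      intro k l hk hl heq
      rcases lt_trichotomy k l with h' | h' | h'
      · exact absurd heq (h k l h' hl)
      · exact h'
      · exact absurd heq.symm (h l k h' hk)

private lemma residue_subgroup (hsc : StronglyConnected E)
    {c g : ℕ} (hc : IsGcdOf c (ClosedLengths E)) (hg0 : 0 < g)
    (v : V) (j : ℤ) (hj : (c : ℤ) ∣ j) :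
    ∃ m : ℕ, HasClosedWalkAt E v m ∧ (m : ZMod g) = ((j : ℤ) : ZMod g) := by
  have h1g : 1 ≤ g := hg0
  let U : AddSubgroup (ZMod g) :=
    { carrier := {x | ∃ m : ℕ, HasClosedWalkAt E v m ∧ (m : ZMod g) = x}
      zero_mem' := ⟨0, hasClosedWalkAt_zero E v, by simp⟩
      add_mem' := by
        rintro x y ⟨m1, h1, rfl⟩ ⟨m2, h2, rfl⟩
        exact ⟨m1 + m2, walkft_trans h1 h2, by push_cast; ring⟩
      neg_mem' := by
        rintro x ⟨m, h, rfl⟩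
        refine ⟨(g - 1) * m, closed_iterate h (g - 1), ?_⟩
        have hg1 : ((g - 1 : ℕ) : ZMod g) = -1 := by
          rw [Nat.cast_sub h1g]
          simp
        rw [Nat.cast_mul, hg1]
        ring }
  have hCL : ∀ s ∈ ClosedLengths E, ((s : ℕ) : ZMod g) ∈ U := by
    rintro s ⟨hs0, ps, hps⟩
    obtain ⟨d, qd, hqd, hqd0, hqdn⟩ := hsc v (ps 0)
    obtain ⟨e, qe, hqe, hqe0, hqen⟩ := hsc (ps 0) v
    have w1 : HasClosedWalkAt E v (d + e) :=
      walkft_trans ⟨qd, hqd, hqd0, hqdn⟩ ⟨qe, hqe, hqe0, hqen⟩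
    have w2 : HasClosedWalkAt E v (d + (s + e)) :=
      walkft_trans ⟨qd, hqd, hqd0, hqdn⟩
        (walkft_trans ⟨ps, hps.1, rfl, hps.2.symm⟩ ⟨qe, hqe, hqe0, hqen⟩)
    have hm : ((d + (s + e) : ℕ) : ZMod g) - ((d + e : ℕ) : ZMod g) ∈ U :=
      U.sub_mem ⟨_, w2, rfl⟩ ⟨_, w1, rfl⟩
    have heq : ((s : ℕ) : ZMod g)
        = ((d + (s + e) : ℕ) : ZMod g) - ((d + e : ℕ) : ZMod g) := by
      push_cast
      ring
    rw [heq]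
    exact hm
  -- the subgroup of ℤ generated by the closed lengths is generated by c
  set S : Set ℤ := (fun s : ℕ => (s : ℤ)) '' ClosedLengths E with hS
  obtain ⟨d₀, hd₀⟩ := Int.subgroup_cyclic (AddSubgroup.closure S)
  have hd₀mem : d₀ ∈ AddSubgroup.closure S := by
    rw [hd₀]
    exact AddSubgroup.subset_closure rfl
  have hcd₀ : (c : ℤ) ∣ d₀ := by
    have hle : AddSubgroup.closure S ≤ AddSubgroup.zmultiples (c : ℤ) := by
      rw [AddSubgroup.closure_le]
      rintro x ⟨s, hs, rfl⟩
      exact Int.mem_zmultiples_iff.mpr (Int.natCast_dvd_natCast.mpr (hc.1 s hs))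
    exact Int.mem_zmultiples_iff.mp (hle hd₀mem)
  have hd₀s : ∀ s ∈ ClosedLengths E, d₀ ∣ (s : ℤ) := by
    intro s hs
    have hmem : (s : ℤ) ∈ AddSubgroup.closure S := AddSubgroup.subset_closure ⟨s, hs, rfl⟩
    rw [hd₀] at hmem
    have hle : AddSubgroup.closure ({d₀} : Set ℤ) ≤ AddSubgroup.zmultiples d₀ := by
      rw [AddSubgroup.closure_le]
      rintro x rfl
      exact Int.mem_zmultiples_iff.mpr dvd_rfl
    exact Int.mem_zmultiples_iff.mp (hle hmem)
  have hd₀c : d₀.natAbs ∣ c := by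
    apply hc.2
    intro s hs
    have := Int.natAbs_dvd_natAbs.mpr (hd₀s s hs)
    rwa [Int.natAbs_natCast] at this
  have hcd : c ∣ d₀.natAbs := by
    have := Int.natAbs_dvd_natAbs.mpr hcd₀
    rwa [Int.natAbs_natCast] at this
  have hceq : d₀.natAbs = c := Nat.dvd_antisymm hd₀c hcd
  have hcS : (c : ℤ) ∈ AddSubgroup.closure S := by
    rcases Int.natAbs_eq d₀ with h | h
    · rw [← hceq, ← h]
      exact hd₀mem
    · rw [← hceq]
      have : (d₀.natAbs : ℤ) = -d₀ := by omega
      rw [this]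
      exact AddSubgroup.neg_mem _ hd₀mem
  have hcU : ((c : ℤ) : ZMod g) ∈ U := by
    have hle : AddSubgroup.closure S ≤ U.comap (Int.castAddHom (ZMod g)) := by
      rw [AddSubgroup.closure_le]
      rintro x ⟨s, hs, rfl⟩
      have : ((s : ℤ) : ZMod g) ∈ U := by
        rw [Int.cast_natCast]
        exact hCL s hs
      exact this
    exact hle hcS
  obtain ⟨w, rfl⟩ := hj
  have hmem : (((c : ℤ) * w : ℤ) : ZMod g) ∈ U := by
    have := AddSubgroup.zsmul_mem U hcU w
    have heq : w • (((c : ℤ)) : ZMod g) = (((c : ℤ) * w : ℤ) : ZMod g) := by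
      rw [zsmul_eq_mul]
      push_cast
      ring
    rwa [heq] at this
  obtain ⟨m, hmw, hmx⟩ := hmem
  exact ⟨m, hmw, hmx⟩

private lemma exists_short_residue [Fintype V] {c g gh : ℕ}
    (hc : IsGcdOf c (ClosedLengths E)) (hc0 : 0 < c) (hgh0 : 0 < gh)
    (hggh : g = c * gh) {v : V} {x : ZMod g}
    (hex : ∃ m : ℕ, HasClosedWalkAt E v m ∧ (m : ZMod g) = x) :
    ∃ m : ℕ, HasClosedWalkAt E v m ∧ (m : ZMod g) = x ∧ m + 1 ≤ Fintype.card V * gh := by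
  classical
  set m := Nat.find hex with hm
  obtain ⟨hmwalk, hmres⟩ : HasClosedWalkAt E v m ∧ (m : ZMod g) = x := Nat.find_spec hex
  refine ⟨m, hmwalk, hmres, ?_⟩
  by_contra hbig
  push_neg at hbig
  obtain ⟨pw, hpw, hpw0, hpwm⟩ := hmwalk
  have hg0 : 0 < g := by
    rw [hggh]
    exact Nat.mul_pos hc0 hgh0
  have key : ∀ k1 k2 : ℕ, k1 < k2 → k2 ≤ m → pw k1 = pw k2 →
      k1 / c % gh = k2 / c % gh → False := by
    intro k1 k2 hlt hk2m hpk hdivmod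
    set Δ := k2 - k1 with hΔ
    have hΔpos : 0 < Δ := by omega
    have hΔCL : Δ ∈ ClosedLengths E := by
      refine ⟨hΔpos, fun t => pw (t + k1), ⟨fun t ht => ?_, ?_⟩⟩
      · have := hpw (t + k1) (by omega)
        rwa [show t + k1 + 1 = t + 1 + k1 by omega] at this
      · show pw (0 + k1) = pw (Δ + k1)
        rw [Nat.zero_add, show Δ + k1 = k2 by omega]
        exact hpk
    have hcΔ : c ∣ Δ := hc.1 Δ hΔCL
    obtain ⟨s, hs⟩ := hcΔ
    have hk2eq : k2 = k1 + c * s := by omega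
    have hdiv2 : k2 / c = k1 / c + s := by
      rw [hk2eq]
      exact Nat.add_mul_div_left k1 s hc0
    have hghs : gh ∣ s := by
      rw [hdiv2] at hdivmod
      have hmodeq : Nat.ModEq gh (k1 / c) (k1 / c + s) := hdivmod
      have := (Nat.modEq_iff_dvd' (Nat.le_add_right _ _)).mp hmodeq
      simpa using this
    have hgΔ : g ∣ Δ := by
      obtain ⟨u, hu⟩ := hghs
      exact ⟨u, by rw [hs, hu, hggh]; ring⟩
    obtain ⟨pw', hpw', h0', hm'⟩ := walk_cut hpw (le_of_lt hlt) hk2m hpk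
    have hwalk' : HasClosedWalkAt E v (m - Δ) :=
      ⟨pw', hpw', by rw [h0', hpw0], by rw [hm', hpwm]⟩
    have hres' : ((m - Δ : ℕ) : ZMod g) = x := by
      rw [Nat.cast_sub (by omega : Δ ≤ m),
        (ZMod.natCast_eq_zero_iff Δ g).mpr hgΔ, sub_zero, hmres]
    have hle : Nat.find hex ≤ m - Δ :=
      Nat.find_le (show HasClosedWalkAt E v (m - Δ) ∧ ((m - Δ : ℕ) : ZMod g) = x from
        ⟨hwalk', hres'⟩)
    rw [← hm] at hle
    omega
  let f : Fin (m + 1) → V × Fin gh :=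
    fun k => (pw k.1, ⟨k.1 / c % gh, Nat.mod_lt _ hgh0⟩)
  have hcard : Fintype.card (V × Fin gh) < Fintype.card (Fin (m + 1)) := by
    rw [Fintype.card_prod, Fintype.card_fin, Fintype.card_fin]
    omega
  obtain ⟨k1, k2, hne, hfeq⟩ := Fintype.exists_ne_map_eq_of_card_lt f hcard
  have hpk : pw k1.1 = pw k2.1 := congrArg Prod.fst hfeq
  have hdm : k1.1 / c % gh = k2.1 / c % gh := by
    have := congrArg Prod.snd hfeq
    simpa [f, Fin.ext_iff] using this
  have hvne : k1.1 ≠ k2.1 := fun h => hne (Fin.ext h)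
  rcases lt_or_gt_of_ne hvne with hlt | hlt
  · exact key k1.1 k2.1 hlt (by omega) hpk hdm
  · exact key k2.1 k1.1 hlt (by omega) hpk.symm hdm.symm

end StmtSevenAux

/-- In a nontrivial strongly connected graph with `N` nodes, girth `g`
and cyclicity `c`, every node `i` has a closed path of every length `n` that is a
multiple of `c` and satisfies `n ≥ 2Ng/c − g/c − 2g + c`. -/
theorem stmt_7 {V : Type*} [Fintype V] (E : V → V → Prop)
    (hnt : NontrivialGraph E) (hsc : StronglyConnected E)
    (c g : ℕ) (hc : IsGcdOf c (ClosedLengths E)) (hg : IsGirth E g)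
    (i : V) (n : ℕ) (hdvd : c ∣ n)
    (hn : 2 * (Fintype.card V : ℝ) * g / c - (g : ℝ) / c - 2 * g + c ≤ (n : ℝ)) :
    HasClosedWalkAt E i n := by
  classical
  obtain ⟨p, hgpos, hpcw, hpinj⟩ := hg.1
  have hpw : IsWalk E g p := hpcw.1
  have hp0g : p 0 = p g := hpcw.2
  have hgCL : g ∈ ClosedLengths E := ⟨hgpos, p, hpcw⟩
  have hcg : c ∣ g := hc.1 g hgCL
  have hc0 : 0 < c := by
    rcases Nat.eq_zero_or_pos c with h | h
    · subst h
      have := Nat.eq_zero_of_zero_dvd hcg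
      omega
    · exact h
  obtain ⟨gh, hggh⟩ := hcg
  have hgh0 : 0 < gh := by
    rcases Nat.eq_zero_or_pos gh with h | h
    · rw [h, Nat.mul_zero] at hggh
      omega
    · exact h
  set N := Fintype.card V with hN
  -- the cycle image
  set Cimg : Finset V := (Finset.range g).image p with hCimg
  have hCcard : Cimg.card = g := by
    rw [hCimg, Finset.card_image_of_injOn, Finset.card_range]
    intro x hx y hy hxy
    exact hpinj x y (Finset.mem_range.mp hx) (Finset.mem_range.mp hy) hxy
  have hgN : g ≤ N := by
    calc g = Cimg.card := hCcard.symm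
    _ ≤ Finset.univ.card := Finset.card_le_univ Cimg
    _ = N := Finset.card_univ
  -- elementary path from i to the cycle, hitting the cycle only at its end
  obtain ⟨n1, q1, hq1w, hq10, hq1n⟩ := hsc i (p 0)
  obtain ⟨β, q, hqw, hq0, hqβ, hqinj⟩ := exists_simple_walk n1 q1 hq1w
  have hq0i : q 0 = i := by rw [hq0, hq10]
  have hqβC : q β ∈ Cimg := by
    rw [hqβ, hq1n]
    exact Finset.mem_image.mpr ⟨0, Finset.mem_range.mpr hgpos, rfl⟩
  have hex0 : ∃ k, k ≤ β ∧ q k ∈ Cimg := ⟨β, le_rfl, hqβC⟩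
  set a := Nat.find hex0 with ha
  obtain ⟨haβ, haC⟩ : a ≤ β ∧ q a ∈ Cimg := Nat.find_spec hex0
  have hamin : ∀ x, x < a → q x ∉ Cimg := by
    intro x hx hxC
    exact Nat.find_min hex0 hx ⟨by omega, hxC⟩
  obtain ⟨π₁, hπ₁g, hπ₁⟩ : ∃ π₁, π₁ < g ∧ p π₁ = q a := by
    obtain ⟨π₁, h1, h2⟩ := Finset.mem_image.mp haC
    exact ⟨π₁, Finset.mem_range.mp h1, h2⟩
  have haN : a + g ≤ N := by
    have hinj1 : Set.InjOn q ↑(Finset.range a) := by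
      intro x hx y hy hxy
      exact hqinj x y (by have := Finset.mem_range.mp (Finset.mem_coe.mp hx); omega)
        (by have := Finset.mem_range.mp (Finset.mem_coe.mp hy); omega) hxy
    have hcard1 : ((Finset.range a).image q).card = a := by
      rw [Finset.card_image_of_injOn hinj1, Finset.card_range]
    have hdisj : Disjoint ((Finset.range a).image q) Cimg := by
      rw [Finset.disjoint_left]
      rintro x hx hxC
      obtain ⟨k, hk, rfl⟩ := Finset.mem_image.mp hx
      exact hamin k (Finset.mem_range.mp hk) hxC
    calc a + g = (((Finset.range a).image q) ∪ Cimg).card := by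
          rw [Finset.card_union_of_disjoint hdisj, hcard1, hCcard]
    _ ≤ Finset.univ.card := Finset.card_le_univ _
    _ = N := Finset.card_univ
  -- elementary path from the cycle to i, hitting the cycle only at its start
  obtain ⟨n2, q2, hq2w, hq20, hq2n⟩ := hsc (p 0) i
  obtain ⟨β', r, hrw, hr0, hrβ, hrinj⟩ := exists_simple_walk n2 q2 hq2w
  have hr0C : r 0 ∈ Cimg := by
    rw [hr0, hq20]
    exact Finset.mem_image.mpr ⟨0, Finset.mem_range.mpr hgpos, rfl⟩
  have hrβi : r β' = i := by rw [hrβ, hq2n]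
  set k₁ := Nat.findGreatest (fun k => r k ∈ Cimg) β' with hk₁
  have hk₁β : k₁ ≤ β' := Nat.findGreatest_le β'
  have hk₁C : r k₁ ∈ Cimg :=
    Nat.findGreatest_spec (P := fun k => r k ∈ Cimg) (Nat.zero_le β') hr0C
  have hk₁max : ∀ x, k₁ < x → x ≤ β' → r x ∉ Cimg := fun x h1 h2 =>
    Nat.findGreatest_is_greatest (P := fun k => r k ∈ Cimg) h1 h2
  set b := β' - k₁ with hb
  obtain ⟨π₂, hπ₂g, hπ₂⟩ : ∃ π₂, π₂ < g ∧ p π₂ = r k₁ := by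
    obtain ⟨π₂, h1, h2⟩ := Finset.mem_image.mp hk₁C
    exact ⟨π₂, Finset.mem_range.mp h1, h2⟩
  have hbN : b + g ≤ N := by
    have hinj1 : Set.InjOn (fun x => r (x + k₁ + 1)) ↑(Finset.range b) := by
      intro x hx y hy hxy
      have hx' := Finset.mem_range.mp (Finset.mem_coe.mp hx)
      have hy' := Finset.mem_range.mp (Finset.mem_coe.mp hy)
      have := hrinj (x + k₁ + 1) (y + k₁ + 1) (by omega) (by omega) hxy
      omega
    have hcard1 : ((Finset.range b).image (fun x => r (x + k₁ + 1))).card = b := by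
      rw [Finset.card_image_of_injOn hinj1, Finset.card_range]
    have hdisj : Disjoint ((Finset.range b).image (fun x => r (x + k₁ + 1))) Cimg := by
      rw [Finset.disjoint_left]
      rintro x hx hxC
      obtain ⟨k, hk, rfl⟩ := Finset.mem_image.mp hx
      have hk' := Finset.mem_range.mp hk
      exact hk₁max (k + k₁ + 1) (by omega) (by omega) hxC
    calc b + g = (((Finset.range b).image (fun x => r (x + k₁ + 1))) ∪ Cimg).card := by
          rw [Finset.card_union_of_disjoint hdisj, hcard1, hCcard]
    _ ≤ Finset.univ.card := Finset.card_le_univ _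
    _ = N := Finset.card_univ
  -- walking around the cycle
  have hedge : ∀ y : ℕ, E (p (y % g)) (p ((y + 1) % g)) := by
    intro y
    have hylt : y % g < g := Nat.mod_lt _ hgpos
    have h2 : (y + 1) % g = (y % g + 1) % g := (Nat.mod_add_mod y g 1).symm
    rcases Nat.lt_or_ge (y % g + 1) g with h | h
    · rw [h2, Nat.mod_eq_of_lt h]
      exact hpw (y % g) hylt
    · have hy1 : y % g + 1 = g := by omega
      have hE := hpw (y % g) hylt
      rw [hy1, ← hp0g] at hE
      rw [h2, hy1, Nat.mod_self]
      exact hE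
  have hcycwalk : ∀ τ, IsWalk E τ (fun x => p ((π₁ + x) % g)) := by
    intro τ k _
    have := hedge (π₁ + k)
    rwa [show π₁ + k + 1 = π₁ + (k + 1) by omega] at this
  have hcyc0 : (fun x => p ((π₁ + x) % g)) 0 = q a := by
    simp only [Nat.add_zero]
    rw [Nat.mod_eq_of_lt hπ₁g, hπ₁]
  set t := (π₂ + g - π₁) % g with hts
  have htg : t < g := Nat.mod_lt _ hgpos
  have hcycend : ∀ kk, (fun x => p ((π₁ + x) % g)) (t + g * kk) = r k₁ := by
    intro kk
    show p ((π₁ + (t + g * kk)) % g) = r k₁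
    have h1 : (π₁ + (t + g * kk)) % g = (π₁ + t) % g := by
      rw [← Nat.add_assoc]
      exact Nat.add_mul_mod_self_left (π₁ + t) g kk
    have h2 : (π₁ + t) % g = π₂ := by
      rw [hts, Nat.add_mod_mod, show π₁ + (π₂ + g - π₁) = π₂ + g by omega,
        Nat.add_mod_right, Nat.mod_eq_of_lt hπ₂g]
    rw [h1, h2, hπ₂]
  -- the three pieces
  have hPwalk : ∃ w, IsWalk E a w ∧ w 0 = i ∧ w a = q a :=
    ⟨q, isWalk_mono hqw haβ, hq0i, rfl⟩
  have hQwalk : ∃ w, IsWalk E b w ∧ w 0 = r k₁ ∧ w b = i := by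
    refine ⟨fun x => r (x + k₁), fun k hk => ?_, by simp, ?_⟩
    · have := hrw (k + k₁) (by omega)
      rwa [show k + k₁ + 1 = k + 1 + k₁ by omega] at this
    · show r (b + k₁) = i
      rw [show b + k₁ = β' by omega, hrβi]
  have hCtwalk : ∃ w, IsWalk E t w ∧ w 0 = q a ∧ w t = r k₁ := by
    refine ⟨fun x => p ((π₁ + x) % g), hcycwalk t, hcyc0, ?_⟩
    have := hcycend 0
    rwa [Nat.mul_zero, Nat.add_zero] at this
  -- the base walk and divisibility
  obtain ⟨w₀, hw₀, hw₀0, hw₀n⟩ := walkft_trans hPwalk (walkft_trans hCtwalk hQwalk)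
  have hcbase : (c : ℤ) ∣ ((a + (t + b) : ℕ) : ℤ) := by
    rcases Nat.eq_zero_or_pos (a + (t + b)) with h | h
    · rw [h]
      exact Dvd.intro 0 rfl
    · have hmem : (a + (t + b)) ∈ ClosedLengths E :=
        ⟨h, w₀, hw₀, by rw [hw₀0, hw₀n]⟩
      exact Int.natCast_dvd_natCast.mpr (hc.1 _ hmem)
  set j : ℤ := (n : ℤ) - (a + (t + b) : ℕ) with hj_def
  have hcj : (c : ℤ) ∣ j := by
    apply dvd_sub (Int.natCast_dvd_natCast.mpr hdvd) hcbase
  -- pick a short closed walk at q a with the right residue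
  obtain ⟨m, hmwalk, hmres, hmbound⟩ :
      ∃ m : ℕ, HasClosedWalkAt E (q a) m ∧ (m : ZMod g) = ((j : ℤ) : ZMod g) ∧
        ((m + 1 ≤ N * gh ∧ 2 ≤ gh) ∨ (gh = 1 ∧ m = 0)) := by
    rcases Nat.lt_or_ge 1 gh with h2 | h1
    · obtain ⟨m0, hm0, hm0res⟩ := residue_subgroup hsc hc hgpos (q a) j hcj
      obtain ⟨m, hm, hmres, hmb⟩ := exists_short_residue hc hc0 hgh0 hggh ⟨m0, hm0, hm0res⟩
      exact ⟨m, hm, hmres, Or.inl ⟨hmb, h2⟩⟩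
    · have hgh1 : gh = 1 := by omega
      have hgc : g = c := by rw [hggh, hgh1, Nat.mul_one]
      refine ⟨0, hasClosedWalkAt_zero E _, ?_, Or.inr ⟨hgh1, rfl⟩⟩
      rw [Nat.cast_zero]
      symm
      rw [ZMod.intCast_zmod_eq_zero_iff_dvd]
      rw [hgc]
      exact_mod_cast hcj
  -- numerics
  have hlt : ((a + (t + b) : ℕ) : ℤ) + m < (n : ℤ) + g := by
    have goalR : ((a : ℝ) + (t + b)) + m < (n : ℝ) + g := by
      have ha' : (a : ℝ) + g ≤ N := by exact_mod_cast haN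
      have hb' : (b : ℝ) + g ≤ N := by exact_mod_cast hbN
      have ht' : (t : ℝ) + 1 ≤ g := by exact_mod_cast htg
      have hc' : (1 : ℝ) ≤ c := by exact_mod_cast hc0
      have hgr : (g : ℝ) = c * gh := by exact_mod_cast hggh
      have hgr1 : (1 : ℝ) ≤ g := by exact_mod_cast hgpos
      have hNr : (g : ℝ) ≤ N := by exact_mod_cast hgN
      have hcne : (c : ℝ) ≠ 0 := by positivity
      have hdivg : (g : ℝ) / c = gh := by
        rw [hgr]
        field_simp
      have hn' : 2 * (N : ℝ) * gh - gh - 2 * g + c ≤ n := by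
        have h1 : 2 * (N : ℝ) * g / c = 2 * N * gh := by
          rw [mul_div_assoc, hdivg]
        rw [← h1, ← hdivg]
        linarith [hn]
      rcases hmbound with ⟨hmb, hgh2⟩ | ⟨hgh1, hm0⟩
      · have hm' : (m : ℝ) + 1 ≤ N * gh := by exact_mod_cast hmb
        have hgh2' : (2 : ℝ) ≤ gh := by exact_mod_cast hgh2
        nlinarith [mul_nonneg (sub_nonneg.mpr hgh2') (sub_nonneg.mpr (by linarith : (1:ℝ) ≤ (N:ℝ)))]
      · have hghr : (gh : ℝ) = 1 := by exact_mod_cast hgh1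
        rw [hm0]
        push_cast
        nlinarith
    have : ((a + (t + b) : ℕ) : ℝ) + m < (n : ℝ) + g := by push_cast; push_cast at goalR; linarith
    exact_mod_cast this
  -- extract the number of extra windings
  have hmres' : ((j - (m : ℤ) : ℤ) : ZMod g) = 0 := by
    rw [Int.cast_sub, Int.cast_natCast, hmres, sub_self]
  have hgdvd : ((g : ℕ) : ℤ) ∣ (j - m) := (ZMod.intCast_zmod_eq_zero_iff_dvd _ g).mp hmres'
  obtain ⟨K, hK⟩ := hgdvd
  have hK0 : 0 ≤ K := by
    by_contra hneg
    push_neg at hneg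
    have hKle : K ≤ -1 := by omega
    have hgpos' : (0 : ℤ) < (g : ℤ) := by exact_mod_cast hgpos
    have : (g : ℤ) * K ≤ (g : ℤ) * (-1) :=
      mul_le_mul_of_nonneg_left hKle (le_of_lt hgpos')
    rw [hj_def] at hK
    linarith
  set kk := K.toNat with hkk
  have hKnat : (kk : ℤ) = K := Int.toNat_of_nonneg hK0
  have hn_eq : n = a + (m + ((t + g * kk) + b)) := by
    have hZ : (n : ℤ) = a + (m + ((t + g * kk) + b)) := by
      have h1 : ((g * kk : ℕ) : ℤ) = (g : ℤ) * K := by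
        push_cast
        rw [hKnat]
      rw [hj_def] at hK
      push_cast at hK h1 ⊢
      linarith
    exact_mod_cast hZ
  rw [hn_eq]
  exact walkft_trans hPwalk (walkft_trans hmwalk
    (walkft_trans ⟨fun x => p ((π₁ + x) % g), hcycwalk (t + g * kk), hcyc0, hcycend kk⟩ hQwalk))

end Transients
end

section
/- Let G be a nontrivial strongly connected directed graph with N nodes, girth g, and cyclicity c. Then the exploration penalty ep(G) of G is well-defined (finite), and ep(G) ≤ 2Ng/c − g/c − 2g + c. -/
namespace Transients

variable {V : Type*}

/-! ### Auxiliary infrastructure for Statement 8 -/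

section Stmt8Aux

variable {W : Type*}

/-- Connectivity by a walk of a given length. -/
def Conn (E : W → W → Prop) (L : ℕ) (i j : W) : Prop :=
  ∃ p, IsWalk E L p ∧ p 0 = i ∧ p L = j

lemma conn_refl (E : W → W → Prop) (i : W) : Conn E 0 i i :=
  ⟨fun _ => i, fun k hk => absurd hk (Nat.not_lt_zero k), rfl, rfl⟩

lemma conn_of_eq {E : W → W → Prop} {L L' : ℕ} {i j : W}
    (h : Conn E L i j) (hL : L = L') : Conn E L' i j := hL ▸ h

lemma conn_trans {E : W → W → Prop} {L M : ℕ} {i x j : W}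
    (h1 : Conn E L i x) (h2 : Conn E M x j) : Conn E (L + M) i j := by
  obtain ⟨p, hp, hp0, hpL⟩ := h1
  obtain ⟨q, hq, hq0, hqM⟩ := h2
  refine ⟨fun k => if k < L then p k else q (k - L), ?_, ?_, ?_⟩
  · intro k hk
    by_cases h1k : k + 1 < L
    · simpa [show k < L by omega, h1k] using hp k (by omega)
    · by_cases hk2 : k < L
      · have hkL : k + 1 = L := by omega
        have he : q (k + 1 - L) = p (k + 1) := by
          have : k + 1 - L = 0 := by omega
          rw [this, hq0, ← hpL, hkL]
        simp only [if_pos hk2, if_neg h1k, he]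
        exact hp k (by omega)
      · simp only [if_neg hk2, if_neg h1k]
        have he : k + 1 - L = (k - L) + 1 := by omega
        rw [he]
        exact hq (k - L) (by omega)
  · by_cases h : 0 < L
    · simpa [h] using hp0
    · have hL0 : L = 0 := by omega
      simp only [if_neg (by omega : ¬ (0:ℕ) < L)]
      rw [Nat.zero_sub, hq0, ← hpL, hL0, hp0]
  · simp only [if_neg (by omega : ¬ L + M < L)]
    rw [Nat.add_sub_cancel_left, hqM]

lemma conn_rev {E : W → W → Prop} {L : ℕ} {i j : W}
    (h : Conn E L i j) : Conn (fun a b => E b a) L j i := by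
  obtain ⟨p, hp, hp0, hpL⟩ := h
  refine ⟨fun k => p (L - k), ?_, ?_, ?_⟩
  · intro k hk
    have h1 : L - (k + 1) + 1 = L - k := by omega
    have := hp (L - (k + 1)) (by omega)
    rw [h1] at this
    exact this
  · simp [hpL]
  · simp [hp0]

/-- Splicing out a repeated-node segment of a walk. -/
lemma walk_splice {E : W → W → Prop} {n : ℕ} {p : ℕ → W} (hp : IsWalk E n p) {k l : ℕ}
    (hkl : k < l) (hl : l ≤ n) (he : p k = p l) :
    IsWalk E (n - (l - k)) (fun j => if j ≤ k then p j else p (j + (l - k))) ∧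
      (fun j => if j ≤ k then p j else p (j + (l - k))) 0 = p 0 ∧
      (fun j => if j ≤ k then p j else p (j + (l - k))) (n - (l - k)) = p n := by
  refine ⟨?_, by simp, ?_⟩
  · intro j hj
    rcases lt_trichotomy j k with h | h | h
    · simp only [if_pos (by omega : j ≤ k), if_pos (by omega : j + 1 ≤ k)]
      exact hp j (by omega)
    · subst h
      simp only [if_pos (le_refl j), if_neg (by omega : ¬ j + 1 ≤ j)]
      have h1 : j + 1 + (l - j) = l + 1 := by omega
      rw [h1, he]
      exact hp l (by omega)
    · simp only [if_neg (by omega : ¬ j ≤ k), if_neg (by omega : ¬ j + 1 ≤ k)]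
      have h1 : j + 1 + (l - k) = (j + (l - k)) + 1 := by omega
      rw [h1]
      exact hp (j + (l - k)) (by omega)
  · by_cases h : n - (l - k) ≤ k
    · have h1 : l = n := by omega
      have h2 : n - (l - k) = k := by omega
      rw [h2]
      simp only [if_pos (le_refl k)]
      rw [he, h1]
    · simp only [if_neg h]
      have h1 : n - (l - k) + (l - k) = n := by omega
      rw [h1]

end Stmt8Aux
section Stmt8Aux2

variable {W : Type*}

/-- First-hit walk into a set: a minimal-length walk into `S` has all interior nodes
distinct and outside `S`. -/
lemma firsthit [Fintype W] [DecidableEq W] {E : W → W → Prop} (S : Finset W) {u : W}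
    (h : ∃ L, ∃ x ∈ S, Conn E L u x) :
    ∃ L, ∃ x ∈ S, Conn E L u x ∧ L + S.card ≤ Fintype.card W := by
  classical
  obtain ⟨x, hxS, p, hp, hp0, hpn⟩ := Nat.find_spec h
  set n := Nat.find h with hn
  have claim1 : ∀ k, k < n → p k ∉ S := by
    intro k hk hmem
    exact Nat.find_min h hk ⟨p k, hmem, p, fun j hj => hp j (by omega), hp0, rfl⟩
  have claim2 : ∀ k l, k < l → l < n → p k ≠ p l := by
    intro k l hkl hln he
    obtain ⟨hw, h0, hend⟩ := walk_splice hp hkl (by omega) he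
    exact Nat.find_min h (show n - (l - k) < n by omega)
      ⟨x, hxS, _, hw, h0.trans hp0, hend.trans hpn⟩
  have hinj : Set.InjOn p (Finset.range n) := by
    intro a ha b hb he
    simp only [Finset.coe_range, Set.mem_Iio] at ha hb
    rcases lt_trichotomy a b with h' | h' | h'
    · exact absurd he (claim2 a b h' hb)
    · exact h'
    · exact absurd he.symm (claim2 b a h' ha)
  have hsub : (Finset.range n).image p ⊆ Finset.univ \ S := by
    intro y hy
    obtain ⟨k, hk, rfl⟩ := Finset.mem_image.1 hy
    exact Finset.mem_sdiff.2 ⟨Finset.mem_univ _, claim1 k (Finset.mem_range.1 hk)⟩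
  have hcard : n ≤ Fintype.card W - S.card := by
    have h1 : ((Finset.range n).image p).card = n := by
      rw [Finset.card_image_of_injOn hinj, Finset.card_range]
    have h2 := Finset.card_le_card hsub
    rw [h1, Finset.card_sdiff_of_subset (Finset.subset_univ S), Finset.card_univ] at h2
    exact h2
  have hSc : S.card ≤ Fintype.card W := by
    simpa using Finset.card_le_univ S
  exact ⟨n, x, hxS, ⟨p, hp, hp0, hpn⟩, by omega⟩

/-- Walking along an elementary closed walk from one of its nodes to another,
possibly with extra full windings. -/
lemma conn_cycle {E : W → W → Prop} {L : ℕ} {p : ℕ → W} (h : IsElemClosedWalk E L p)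
    {t t' : ℕ} (ht : t < L) (ht' : t' < L) (k : ℕ) :
    Conn E ((L + t' - t) % L + k * L) (p t) (p t') := by
  obtain ⟨hL, ⟨hw, hcl⟩, -⟩ := h
  refine ⟨fun j => p ((t + j) % L), ?_, ?_, ?_⟩
  · intro j hj
    have e1 := Nat.div_add_mod (t + j) L
    have hr : (t + j) % L < L := Nat.mod_lt _ hL
    set r := (t + j) % L with hrdef
    have e1' : ((t + j) / L) * L = L * ((t + j) / L) := Nat.mul_comm _ _
    have h2 : t + (j + 1) = (r + 1) + ((t + j) / L) * L := by omega
    by_cases hc2 : r + 1 < L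
    · have h3 : (t + (j + 1)) % L = r + 1 := by
        rw [h2, Nat.add_mul_mod_self_right, Nat.mod_eq_of_lt hc2]
      show E (p r) (p ((t + (j + 1)) % L))
      rw [h3]
      exact hw r hr
    · have hrL : r + 1 = L := by omega
      have h3 : (t + (j + 1)) % L = 0 := by
        rw [h2, Nat.add_mul_mod_self_right, hrL, Nat.mod_self]
      show E (p r) (p ((t + (j + 1)) % L))
      rw [h3, hcl, ← hrL]
      exact hw r hr
  · show p ((t + 0) % L) = p t
    rw [Nat.add_zero, Nat.mod_eq_of_lt ht]
  · show p ((t + ((L + t' - t) % L + k * L)) % L) = p t'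
    rw [← Nat.add_assoc, Nat.add_mul_mod_self_right]
    by_cases hc2 : t ≤ t'
    · have hA : (L + t' - t) % L = t' - t := by
        rw [show L + t' - t = (t' - t) + 1 * L by omega, Nat.add_mul_mod_self_right,
          Nat.mod_eq_of_lt (by omega)]
      rw [hA, show t + (t' - t) = t' by omega, Nat.mod_eq_of_lt ht']
    · have hA : (L + t' - t) % L = L + t' - t := Nat.mod_eq_of_lt (by omega)
      rw [hA, show t + (L + t' - t) = t' + 1 * L by omega, Nat.add_mul_mod_self_right,
        Nat.mod_eq_of_lt ht']

lemma elem_card [Fintype W] [DecidableEq W] {E : W → W → Prop} {L : ℕ} {p : ℕ → W}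
    (h : IsElemClosedWalk E L p) : ((Finset.range L).image p).card = L := by
  have hinj : Set.InjOn p (Finset.range L) := by
    intro a ha b hb he
    simp only [Finset.coe_range, Set.mem_Iio] at ha hb
    exact h.2.2 a b ha hb he
  rw [Finset.card_image_of_injOn hinj, Finset.card_range]

/-- Every closed walk length is divisible by any common divisor of the lengths of
elementary closed walks. -/
lemma decomp {E : W → W → Prop} (e : ℕ)
    (he : ∀ L p, IsElemClosedWalk E L p → e ∣ L) :
    ∀ n, ∀ p : ℕ → W, IsClosedWalk E n p → e ∣ n := by
  intro n
  induction n using Nat.strong_induction_on with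
  | _ n ih =>
    intro p hp
    by_cases hinj : ∀ k l, k < n → l < n → p k = p l → k = l
    · rcases Nat.eq_zero_or_pos n with h0 | h0
      · simp [h0]
      · exact he n p ⟨h0, hp, hinj⟩
    · push_neg at hinj
      obtain ⟨k, l, hk, hl, hpe, hne⟩ := hinj
      have key : ∀ k l, k < l → l < n → p k = p l → e ∣ n := by
        intro k l hkl hln hpe
        have hin : IsClosedWalk E (l - k) (fun j => p (k + j)) := by
          refine ⟨fun j hj => hp.1 (k + j) (by omega), ?_⟩
          show p (k + 0) = p (k + (l - k))
          rw [Nat.add_zero, show k + (l - k) = l by omega, hpe]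
        obtain ⟨hw, h0, hend⟩ := walk_splice hp.1 hkl (by omega) hpe
        have hout : IsClosedWalk E (n - (l - k)) _ :=
          ⟨hw, (h0.trans hp.2).trans hend.symm⟩
        have d1 := ih (l - k) (by omega) _ hin
        have d2 := ih (n - (l - k)) (by omega) _ hout
        have := Nat.dvd_add d1 d2
        rwa [show (l - k) + (n - (l - k)) = n by omega] at this
      rcases lt_or_gt_of_ne hne with h' | h'
      · exact key k l h' hl hpe
      · exact key l k h' hk hpe.symm

lemma foldl_gcd_dvd : ∀ (l : List ℕ) (d : ℕ), l.foldl Nat.gcd d ∣ d := by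
  intro l
  induction l with
  | nil => intro d; exact dvd_refl d
  | cons a l ih =>
    intro d
    exact dvd_trans (ih (Nat.gcd d a)) (Nat.gcd_dvd_left d a)

lemma foldl_gcd_pos : ∀ (l : List ℕ) (d : ℕ), 0 < d → 0 < l.foldl Nat.gcd d := by
  intro l
  induction l with
  | nil => intro d hd; exact hd
  | cons a l ih =>
    intro d hd
    exact ih (Nat.gcd d a) (Nat.gcd_pos_of_pos_left a hd)

/-- Greedy construction of a gcd chain from `d` down to `c` through elements
satisfying a predicate. -/
lemma greedy (P : ℕ → Prop) (c : ℕ) (hPc : ∀ a, P a → c ∣ a)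
    (hdc : ∀ d, 0 < d → (∀ a, P a → d ∣ a) → d ∣ c) :
    ∀ d : ℕ, 0 < d → c ∣ d →
      ∃ l : List ℕ, (∀ a ∈ l, P a) ∧ l.foldl Nat.gcd d = c ∧ l.length + 1 ≤ d / c := by
  intro d
  induction d using Nat.strong_induction_on with
  | _ d ih =>
    intro hd hcd
    by_cases hall : ∀ a, P a → d ∣ a
    · have h2 : d = c := Nat.dvd_antisymm (hdc d hd hall) hcd
      refine ⟨[], by simp, by simpa using h2, ?_⟩
      rw [h2, Nat.div_self (h2 ▸ hd)]
      simp
    · push_neg at hall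
      obtain ⟨a, hPa, hnd⟩ := hall
      set e := Nat.gcd d a with hedef
      have hed : e ∣ d := Nat.gcd_dvd_left d a
      have hene : e ≠ d := fun h => hnd (h ▸ Nat.gcd_dvd_right d a)
      have he0 : 0 < e := Nat.gcd_pos_of_pos_left a hd
      have hlt : e < d := lt_of_le_of_ne (Nat.le_of_dvd hd hed) hene
      have hce : c ∣ e := Nat.dvd_gcd hcd (hPc a hPa)
      have hc0 : 0 < c := Nat.pos_of_dvd_of_pos hce he0
      obtain ⟨l', hl'P, hl'g, hl'len⟩ := ih e hlt he0 hce
      refine ⟨a :: l', ?_, ?_, ?_⟩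
      · intro b hb
        rcases List.mem_cons.1 hb with h | h
        · exact h ▸ hPa
        · exact hl'P b h
      · simpa [List.foldl_cons] using hl'g
      · obtain ⟨m, hm⟩ := hed
        have hm2 : 2 ≤ m := by
          rcases m with _ | _ | m
          · omega
          · exfalso; apply hene; omega
          · omega
        obtain ⟨u, hu⟩ := hce
        have hu1 : 1 ≤ u := by
          rcases u with _ | u
          · omega
          · omega
        have hdc' : d / c = u * m := by
          rw [hm, hu, Nat.mul_assoc, Nat.mul_div_cancel_left _ hc0]
        have he_c : e / c = u := by
          rw [hu, Nat.mul_div_cancel_left _ hc0]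
        rw [he_c] at hl'len
        have : u + 1 ≤ u * m := by nlinarith
        simp only [List.length_cons]
        omega

/-- One step of the residue-solving lemma, via Bézout. -/
lemma numstep (d lam : ℕ) (hd : 0 < d) (D : ℤ) (hdvd : (Nat.gcd d lam : ℤ) ∣ D) :
    ∃ m : ℕ, m + 1 ≤ d / Nat.gcd d lam ∧ (d : ℤ) ∣ D - m * lam := by
  set e := Nat.gcd d lam with he
  have he0 : 0 < e := Nat.gcd_pos_of_pos_left lam hd
  obtain ⟨A, hA⟩ : e ∣ d := Nat.gcd_dvd_left d lam
  obtain ⟨lam', hlam'⟩ : e ∣ lam := Nat.gcd_dvd_right d lam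
  have hA0 : 0 < A := by
    rcases Nat.eq_zero_or_pos A with h | h
    · rw [h, Nat.mul_zero] at hA; omega
    · exact h
  obtain ⟨D', rfl⟩ := hdvd
  have hbez : (e : ℤ) = (d : ℤ) * Nat.gcdA d lam + (lam : ℤ) * Nat.gcdB d lam :=
    Nat.gcd_eq_gcd_ab d lam
  set v := Nat.gcdB d lam with hv
  set Mz := (D' * v) % (A : ℤ) with hMz
  have hA0' : (0 : ℤ) < (A : ℤ) := by exact_mod_cast hA0
  have hMz0 : 0 ≤ Mz := Int.emod_nonneg _ (by omega)
  have hMzlt : Mz < (A : ℤ) := Int.emod_lt_of_pos _ hA0'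
  have hde : d / e = A := by rw [hA, Nat.mul_div_cancel_left _ he0]
  refine ⟨Mz.toNat, ?_, ?_⟩
  · have h2 : (Mz.toNat : ℤ) < (A : ℤ) := by rwa [Int.toNat_of_nonneg hMz0]
    have h3 : Mz.toNat < A := by exact_mod_cast h2
    omega
  · obtain ⟨tq, htq⟩ : (A : ℤ) ∣ (D' * v - Mz) := by
      refine ⟨(D' * v) / (A : ℤ), ?_⟩
      have := Int.mul_ediv_add_emod (D' * v) (A : ℤ)
      rw [hMz]
      linarith
    refine ⟨D' * Nat.gcdA d lam + (lam' : ℤ) * tq, ?_⟩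
    rw [Int.toNat_of_nonneg hMz0]
    have hlamZ : (lam : ℤ) = (e : ℤ) * (lam' : ℤ) := by exact_mod_cast hlam'
    have hdZ : (d : ℤ) = (e : ℤ) * (A : ℤ) := by exact_mod_cast hA
    linear_combination (D' : ℤ) * hbez + (lam : ℤ) * htq + (tq * (A : ℤ)) * hlamZ -
      (tq * (lam' : ℤ)) * hdZ

/-- Weighted sum of windings. -/
def zws (m l : List ℕ) : ℕ := (List.zipWith (· * ·) m l).sum

lemma zws_cons (m1 lam : ℕ) (m' l : List ℕ) :
    zws (m1 :: m') (lam :: l) = m1 * lam + zws m' l := by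
  simp [zws]

lemma zws_nil (l : List ℕ) : zws [] l = 0 := by simp [zws]

lemma zws_replicate_zero : ∀ (l : List ℕ) (n : ℕ), zws (List.replicate n 0) l = 0 := by
  intro l
  induction l with
  | nil => intro n; simp [zws]
  | cons a l ih =>
    intro n
    cases n with
    | zero => simp [zws]
    | succ n =>
      have := ih n
      simp only [List.replicate_succ, zws_cons, this, Nat.zero_mul, Nat.add_zero]

lemma zws_le {l : List ℕ} {Nb : ℕ} (hl : ∀ a ∈ l, a ≤ Nb) :
    ∀ m : List ℕ, zws m l ≤ m.sum * Nb := by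
  induction l with
  | nil =>
    intro m
    cases m <;> simp [zws]
  | cons b l ih =>
    intro m
    cases m with
    | nil => simp [zws]
    | cons a m =>
      rw [zws_cons]
      have h1 : a * b ≤ a * Nb := Nat.mul_le_mul_left a (hl b (by simp))
      have h2 := ih (fun x hx => hl x (by simp [hx])) m
      calc a * b + zws m l ≤ a * Nb + m.sum * Nb := Nat.add_le_add h1 h2
        _ = (a :: m).sum * Nb := by simp [List.sum_cons, Nat.add_mul]

lemma div_helper (a b k : ℕ) (hb : 0 < b) (h : a = b * k) : a / b = k := by
  rw [h, Nat.mul_div_cancel_left _ hb]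

/-- The residue-solving lemma along a gcd chain. -/
lemma numlemma : ∀ (l : List ℕ) (d : ℕ), 0 < d → ∀ D : ℤ,
    ((l.foldl Nat.gcd d : ℕ) : ℤ) ∣ D →
    ∃ m : List ℕ, m.length = l.length ∧ m.sum + 1 ≤ d / l.foldl Nat.gcd d ∧
      (d : ℤ) ∣ D - (zws m l : ℤ) := by
  intro l
  induction l with
  | nil =>
    intro d hd D hdvd
    refine ⟨[], rfl, by simp [Nat.div_self hd], ?_⟩
    rw [zws_nil]
    simpa using hdvd
  | cons lam l ih =>
    intro d hd D hdvd
    have he0 : 0 < Nat.gcd d lam := Nat.gcd_pos_of_pos_left lam hd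
    have hfold : (lam :: l).foldl Nat.gcd d = l.foldl Nat.gcd (Nat.gcd d lam) := by
      simp [List.foldl_cons]
    rw [hfold] at hdvd
    obtain ⟨m', hlen, hsum, hdvd'⟩ := ih (Nat.gcd d lam) he0 D hdvd
    obtain ⟨m1, hm1, hdvd2⟩ := numstep d lam hd (D - (zws m' l : ℤ)) hdvd'
    refine ⟨m1 :: m', by simp [hlen], ?_, ?_⟩
    · rw [hfold]
      have hc'e : l.foldl Nat.gcd (Nat.gcd d lam) ∣ Nat.gcd d lam :=
        foldl_gcd_dvd l (Nat.gcd d lam)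
      have hc'0 : 0 < l.foldl Nat.gcd (Nat.gcd d lam) := foldl_gcd_pos l _ he0
      obtain ⟨A, hA⟩ : Nat.gcd d lam ∣ d := Nat.gcd_dvd_left d lam
      obtain ⟨B, hB⟩ := hc'e
      have hA0 : 0 < A := by
        rcases Nat.eq_zero_or_pos A with h | h
        · rw [h, Nat.mul_zero] at hA; omega
        · exact h
      have hB0 : 0 < B := by
        rcases Nat.eq_zero_or_pos B with h | h
        · rw [h, Nat.mul_zero] at hB; omega
        · exact h
      have hde : d / Nat.gcd d lam = A := div_helper _ _ _ he0 hA
      have hec : Nat.gcd d lam / l.foldl Nat.gcd (Nat.gcd d lam) = B :=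
        div_helper _ _ _ hc'0 hB
      have hdc' : d / l.foldl Nat.gcd (Nat.gcd d lam) = A * B := by
        refine div_helper _ _ _ hc'0 ?_
        set F := l.foldl Nat.gcd (Nat.gcd d lam) with hF
        rw [hA, hB]; ring
      rw [hde] at hm1
      rw [hec] at hsum
      have hAB : A + B ≤ A * B + 1 := by nlinarith
      simp only [List.sum_cons]
      rw [hdc']
      omega
    · rw [zws_cons]
      have h3 : D - ((m1 * lam + zws m' l : ℕ) : ℤ)
          = (D - (zws m' l : ℤ)) - (m1 : ℤ) * (lam : ℤ) := by
        push_cast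
        ring
      rw [h3]
      exact hdvd2

end Stmt8Aux2
/-- The exploration penalty `ep(G)` of a nontrivial strongly connected
graph with `N` nodes, girth `g` and cyclicity `c` is well-defined and satisfies
`ep(G) ≤ 2Ng/c − g/c − 2g + c`. -/
theorem stmt_8 {V : Type*} [Fintype V] (E : V → V → Prop)
    (hnt : NontrivialGraph E) (hsc : StronglyConnected E)
    (c g : ℕ) (hc : IsGcdOf c (ClosedLengths E)) (hg : IsGirth E g) :
    ∃ ep : ℕ, IsEp E c ep ∧
      (ep : ℝ) ≤ 2 * (Fintype.card V : ℝ) * g / c - (g : ℝ) / c - 2 * g + c := by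
  classical
  obtain ⟨⟨pγ, hγ⟩, hgmin⟩ := hg
  set N := Fintype.card V with hN
  have hg0 : 0 < g := hγ.1
  set γset : Finset V := (Finset.range g).image pγ with hγsetdef
  have hγcard : γset.card = g := elem_card hγ
  have hgN : g ≤ N := by
    rw [← hγcard, hN]
    exact Finset.card_le_univ γset
  have hcg : c ∣ g := hc.1 g ⟨hg0, pγ, hγ.2.1⟩
  have hc0 : 0 < c := Nat.pos_of_dvd_of_pos hcg hg0
  have hcleg : c ≤ g := Nat.le_of_dvd hg0 hcg
  set q := g / c with hqdef
  have hgcq : g = c * q := by rw [hqdef]; exact (Nat.mul_div_cancel' hcg).symm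
  have hq1 : 1 ≤ q := by
    rcases Nat.eq_zero_or_pos q with h | h
    · rw [h, Nat.mul_zero] at hgcq; omega
    · exact h
  -- facts about elementary closed walk lengths
  have hELc : ∀ a : ℕ, (∃ p, IsElemClosedWalk E a p) → c ∣ a := by
    rintro a ⟨p, hp⟩
    exact hc.1 a ⟨hp.1, p, hp.2.1⟩
  have hELg : ∀ a : ℕ, (∃ p, IsElemClosedWalk E a p) → g ≤ a := fun a ha => hgmin ha
  have hELN : ∀ a : ℕ, (∃ p, IsElemClosedWalk E a p) → a ≤ N := by
    rintro a ⟨p, hp⟩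
    have h1 := elem_card hp
    rw [← h1, hN]
    exact Finset.card_le_univ _
  have hdc : ∀ d, 0 < d → (∀ a, (∃ p, IsElemClosedWalk E a p) → d ∣ a) → d ∣ c := by
    intro d hd hall
    refine hc.2 d ?_
    rintro s ⟨hs0, p, hp⟩
    exact decomp d (fun L p hLp => hall L ⟨p, hLp⟩) s p hp
  obtain ⟨l, hlP, hlgcd, hlen⟩ :=
    greedy (fun a => ∃ p, IsElemClosedWalk E a p) c hELc hdc g hg0 hcg
  rw [← hqdef] at hlen
  -- the per-node chain assembly
  have asm : ∀ (l' : List ℕ), (∀ a ∈ l', ∃ p, IsElemClosedWalk E a p) → ∀ x : V,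
      ∃ (b : ℕ) (t : ℕ), t < g ∧
        b ≤ (l'.map (fun a => N - a)).sum + (N - g) ∧
        ∀ m : List ℕ, m.length = l'.length → Conn E (b + zws m l') x (pγ t) := by
    intro l'
    induction l' with
    | nil =>
      intro _ x
      have hpre : ∃ L, ∃ y ∈ γset, Conn E L x y := by
        obtain ⟨n0, p0, hw0, h00, h0n⟩ := hsc x (pγ 0)
        exact ⟨n0, pγ 0, Finset.mem_image.2 ⟨0, Finset.mem_range.2 hg0, rfl⟩,
          p0, hw0, h00, h0n⟩
      obtain ⟨L, y, hyS, hconn, hbound⟩ := firsthit γset hpre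
      obtain ⟨t, ht, rfl⟩ := Finset.mem_image.1 hyS
      rw [hγcard] at hbound
      refine ⟨L, t, Finset.mem_range.1 ht, by simpa using (by omega : L ≤ N - g), ?_⟩
      intro m hm
      rw [List.length_nil] at hm
      rw [List.length_eq_zero_iff.1 hm, zws_nil, Nat.add_zero]
      exact hconn
    | cons lam l'' ih =>
      intro hall x
      obtain ⟨pζ, hζ⟩ := hall lam (by simp)
      have hlam0 : 0 < lam := hζ.1
      have hpre : ∃ L, ∃ y ∈ (Finset.range lam).image pζ, Conn E L x y := by
        obtain ⟨n0, p0, hw0, h00, h0n⟩ := hsc x (pζ 0)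
        exact ⟨n0, pζ 0, Finset.mem_image.2 ⟨0, Finset.mem_range.2 hlam0, rfl⟩,
          p0, hw0, h00, h0n⟩
      obtain ⟨e0, y, hyS, hconn0, hbound0⟩ := firsthit ((Finset.range lam).image pζ) hpre
      obtain ⟨s, hs, hsy⟩ := Finset.mem_image.1 hyS
      have hs' : s < lam := Finset.mem_range.1 hs
      rw [elem_card hζ] at hbound0
      obtain ⟨b', t, htg, hb', hfam⟩ := ih (fun a ha => hall a (by simp [ha])) y
      refine ⟨e0 + b', t, htg, ?_, ?_⟩
      · simp only [List.map_cons, List.sum_cons]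
        omega
      · intro m hm
        rcases m with _ | ⟨m1, m'⟩
        · simp at hm
        · have hm' : m'.length = l''.length := by simpa using hm
          have hw0 := conn_cycle hζ hs' hs' m1
          have hlen0 : (lam + s - s) % lam + m1 * lam = m1 * lam := by
            rw [show lam + s - s = lam by omega, Nat.mod_self, Nat.zero_add]
          have hwind : Conn E (m1 * lam) y y := by
            rw [← hsy]
            exact conn_of_eq hw0 hlen0
          have h2 := conn_trans (conn_trans hconn0 hwind) (hfam m' hm')
          exact conn_of_eq h2 (by rw [zws_cons]; ring)
  -- the per-node closed-walk family
  have family : ∀ i : V, ∃ base : ℕ,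
      base ≤ (l.map (fun a => N - a)).sum + (N - g) + (g - 1) + (N - g) ∧ c ∣ base ∧
      ∀ (m : List ℕ) (k : ℕ), m.length = l.length →
        HasClosedWalkAt E i (base + zws m l + k * g) := by
    intro i
    obtain ⟨b, tv, htv, hb, hfam⟩ := asm l hlP i
    -- exit walk from the girth cycle back to i
    have hpre2 : ∃ L, ∃ y ∈ γset, Conn (fun a b => E b a) L i y := by
      obtain ⟨n0, p0, hw0, h00, h0n⟩ := hsc (pγ 0) i
      exact ⟨n0, pγ 0, Finset.mem_image.2 ⟨0, Finset.mem_range.2 hg0, rfl⟩,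
        conn_rev ⟨p0, hw0, h00, h0n⟩⟩
    obtain ⟨f, w, hwS, hconnf, hboundf⟩ := firsthit (E := fun a b => E b a) γset hpre2
    obtain ⟨tw, htw', hwy⟩ := Finset.mem_image.1 hwS
    have htw : tw < g := Finset.mem_range.1 htw'
    rw [hγcard] at hboundf
    have hexit : Conn E f w i := conn_rev hconnf
    have hs0lt : (g + tw - tv) % g < g := Nat.mod_lt _ hg0
    have hfami : ∀ (m : List ℕ) (k : ℕ), m.length = l.length →
        HasClosedWalkAt E i (b + (g + tw - tv) % g + f + zws m l + k * g) := by
      intro m k hm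
      have h1 : Conn E ((b + zws m l) + ((g + tw - tv) % g + k * g)) i w := by
        rw [← hwy]
        exact conn_trans (hfam m hm) (conn_cycle hγ htv htw k)
      have h2 := conn_trans h1 hexit
      exact conn_of_eq h2 (by ring)
    refine ⟨b + (g + tw - tv) % g + f, by omega, ?_, hfami⟩
    have hbase0 := hfami (List.replicate l.length 0) 0 (by simp)
    rw [zws_replicate_zero, Nat.add_zero, Nat.zero_mul, Nat.add_zero] at hbase0
    rcases Nat.eq_zero_or_pos (b + (g + tw - tv) % g + f) with h0 | h0
    · rw [h0]; exact dvd_zero c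
    · obtain ⟨p, hp, hp0, hpn⟩ := hbase0
      exact hc.1 _ ⟨h0, p, hp, hp0.trans hpn.symm⟩
  -- the threshold
  set Bn := (q - 1) * (2 * N - 1 - c) + (2 * N - g - 1) with hBndef
  have main : ∀ (i : V) (n : ℕ), c ∣ n → Bn ≤ n → HasClosedWalkAt E i n := by
    intro i n hcn hBn
    obtain ⟨base, hbaseB, hbasec, hfami⟩ := family i
    have hD : ((l.foldl Nat.gcd g : ℕ) : ℤ) ∣ ((n : ℤ) - (base : ℤ)) := by
      rw [hlgcd]
      exact dvd_sub (Int.natCast_dvd_natCast.2 hcn) (Int.natCast_dvd_natCast.2 hbasec)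
    obtain ⟨m, hmlen, hmsum, hmdvd⟩ := numlemma l g hg0 _ hD
    rw [hlgcd, ← hqdef] at hmsum
    have hmsum' : m.sum ≤ q - 1 := by omega
    have hslen : l.length ≤ q - 1 := by omega
    have hmapb : (l.map (fun a => N - a)).sum ≤ l.length * (N - g) := by
      have h := List.sum_le_card_nsmul (l.map (fun a => N - a)) (N - g) ?_
      · simpa [smul_eq_mul] using h
      · intro x hx
        obtain ⟨a, ha, rfl⟩ := List.mem_map.1 hx
        have := hELg a (hlP a ha)
        omega
    have hzb : zws m l ≤ m.sum * N := zws_le (fun a ha => hELN a (hlP a ha)) m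
    have h2' : (l.map (fun a => N - a)).sum ≤ (q - 1) * (N - g) :=
      le_trans hmapb (Nat.mul_le_mul hslen (le_refl _))
    have t1 : base ≤ (q - 1) * (N - g) + (N - g) + (g - 1) + (N - g) :=
      le_trans hbaseB
        (Nat.add_le_add_right (Nat.add_le_add_right (Nat.add_le_add_right h2' _) _) _)
    have t2 : zws m l ≤ (q - 1) * N := le_trans hzb (Nat.mul_le_mul hmsum' (le_refl _))
    have t3 : (q - 1) * (N - g) + (q - 1) * N ≤ (q - 1) * (2 * N - 1 - c) := by
      rcases Nat.eq_zero_or_pos (q - 1) with h | h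
      · rw [h]; simp
      · have hq2 : 2 ≤ q := by omega
        have h2c : 2 * c ≤ g := by
          rw [hgcq]
          calc 2 * c = c * 2 := by ring
            _ ≤ c * q := Nat.mul_le_mul (le_refl c) hq2
        have hin : (N - g) + N ≤ 2 * N - 1 - c := by omega
        calc (q - 1) * (N - g) + (q - 1) * N = (q - 1) * ((N - g) + N) := by ring
          _ ≤ (q - 1) * (2 * N - 1 - c) := Nat.mul_le_mul (le_refl _) hin
    have t4 : (N - g) + (g - 1) + (N - g) ≤ 2 * N - g - 1 := by omega
    have hbud : base + zws m l ≤ Bn := by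
      calc base + zws m l
          ≤ ((q - 1) * (N - g) + (N - g) + (g - 1) + (N - g)) + (q - 1) * N :=
            Nat.add_le_add t1 t2
        _ = ((q - 1) * (N - g) + (q - 1) * N) + ((N - g) + (g - 1) + (N - g)) := by ring
        _ ≤ (q - 1) * (2 * N - 1 - c) + ((N - g) + (g - 1) + (N - g)) :=
            Nat.add_le_add_right t3 _
        _ ≤ (q - 1) * (2 * N - 1 - c) + (2 * N - g - 1) := Nat.add_le_add_left t4 _
    have hle : base + zws m l ≤ n := le_trans hbud hBn
    have hr : (g : ℤ) ∣ ((n - (base + zws m l) : ℕ) : ℤ) := by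
      have hcast : ((n - (base + zws m l) : ℕ) : ℤ) = ((n : ℤ) - (base : ℤ)) - (zws m l : ℤ) := by
        push_cast
        omega
      rw [hcast]
      exact hmdvd
    obtain ⟨k, hk⟩ := Int.natCast_dvd_natCast.1 hr
    have h5 : n = base + zws m l + k * g := by
      conv_lhs => rw [← Nat.sub_add_cancel hle, hk]
      ring
    rw [h5]
    exact hfami m k hmlen
  have hBM : Bn ∈ {m : ℕ | ∀ i : V, ∀ n : ℕ, c ∣ n → m ≤ n → HasClosedWalkAt E i n} :=
    fun i n hcn hle => main i n hcn hle
  refine ⟨sInf {m : ℕ | ∀ i : V, ∀ n : ℕ, c ∣ n → m ≤ n → HasClosedWalkAt E i n},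
    ⟨Nat.sInf_mem ⟨Bn, hBM⟩, fun b hb => Nat.sInf_le hb⟩, ?_⟩
  have hle2 : sInf {m : ℕ | ∀ i : V, ∀ n : ℕ, c ∣ n → m ≤ n → HasClosedWalkAt E i n} ≤ Bn :=
    Nat.sInf_le hBM
  have hcast : (Bn : ℝ) = 2 * (N : ℝ) * g / c - (g : ℝ) / c - 2 * g + c := by
    have e1 : ((q - 1 : ℕ) : ℝ) = (q : ℝ) - 1 := by
      rw [Nat.cast_sub hq1, Nat.cast_one]
    have e2 : ((2 * N - 1 - c : ℕ) : ℝ) = 2 * (N : ℝ) - 1 - (c : ℝ) := by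
      rw [show 2 * N - 1 - c = 2 * N - (1 + c) by omega, Nat.cast_sub (by omega)]
      push_cast
      ring
    have e3 : ((2 * N - g - 1 : ℕ) : ℝ) = 2 * (N : ℝ) - (g : ℝ) - 1 := by
      rw [show 2 * N - g - 1 = 2 * N - (g + 1) by omega, Nat.cast_sub (by omega)]
      push_cast
      ring
    have hqR : (g : ℝ) = (c : ℝ) * (q : ℝ) := by exact_mod_cast hgcq
    have hcne : (c : ℝ) ≠ 0 := Nat.cast_ne_zero.2 (by omega)
    rw [hBndef, Nat.cast_add, Nat.cast_mul, e1, e2, e3, hqR]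
    field_simp
    ring
  calc ((sInf {m : ℕ | ∀ i : V, ∀ n : ℕ, c ∣ n → m ≤ n → HasClosedWalkAt E i n} : ℕ) : ℝ)
      ≤ (Bn : ℝ) := Nat.cast_le.2 hle2
    _ = 2 * (N : ℝ) * g / c - (g : ℝ) / c - 2 * g + c := hcast

end Transients
end
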